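/- With d: F_2 → ℤ as defined via normal forms, for all u, v ∈ F_2 we have d(uv) − d(vu) = e_α(u)·e_β(v) − e_α(v)·e_β(u). -/
import Mathlib

/-- sign of a `Bool` exponent: `true ↦ 1`, `false ↦ -1`. -/
def sgn (b : Bool) : ℤ := if b then 1 else -1

/-- Auxiliary computation of Morita's function `d` on a (reduced) word in the
free group on two generators (`false` = α, `true` = β), keeping a running
sum `acc` of the α-exponents read so far.  Each letter `β^{δ}` contributes
`δ * acc`. -/
def dWord : List (Bool × Bool) → ℤ → ℤ
  | [], _ => 0
  | (g, s) :: rest, acc =>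
      if g then sgn s * acc + dWord rest acc
      else dWord rest (acc + sgn s)

/-- Morita's function `d : F₂ → ℤ`, defined on the normal form
`α^{ε_1}β^{δ_1}⋯α^{ε_n}β^{δ_n}` by `d = Σ_i δ_i (ε_1 + ⋯ + ε_i)`,
computed here from the reduced word. -/
def moritaD (w : FreeGroup Bool) : ℤ := dWord w.toWord 0

/-- Exponent sum of the generator `g` in the word `w`. -/
def expSum (g : Bool) (w : FreeGroup Bool) : ℤ :=
  (w.toWord.map fun p => if p.1 = g then sgn p.2 else 0).sum

/-- The generator α of F₂. -/
def genα : FreeGroup Bool := FreeGroup.of false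

/-- The generator β of F₂. -/
def genβ : FreeGroup Bool := FreeGroup.of true

/-- Exponent sum of a generator on a raw word. -/
def listE (g : Bool) (L : List (Bool × Bool)) : ℤ :=
  (L.map fun p => if p.1 = g then sgn p.2 else 0).sum

lemma sgn_not (b : Bool) : sgn (!b) = - sgn b := by cases b <;> rfl

lemma listE_append (g : Bool) (L₁ L₂ : List (Bool × Bool)) :
    listE g (L₁ ++ L₂) = listE g L₁ + listE g L₂ := by
  simp [listE]

lemma dWord_acc (L : List (Bool × Bool)) : ∀ acc : ℤ,
    dWord L acc = dWord L 0 + acc * listE true L := by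
  induction L with
  | nil => intro acc; simp [dWord, listE]
  | cons p rest ih =>
    intro acc
    obtain ⟨g, s⟩ := p
    cases g
    · simp only [dWord, listE, List.map_cons, List.sum_cons,
        Bool.false_eq_true, if_false]
      rw [ih (acc + sgn s), ih (0 + sgn s)]
      simp only [listE]
      ring
    · simp only [dWord, listE, List.map_cons, List.sum_cons, if_true]
      rw [ih acc]
      simp only [listE]
      ring

lemma dWord_append (L₁ L₂ : List (Bool × Bool)) : ∀ acc : ℤ,
    dWord (L₁ ++ L₂) acc = dWord L₁ acc + dWord L₂ (acc + listE false L₁) := by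
  induction L₁ with
  | nil => intro acc; simp [dWord, listE]
  | cons p rest ih =>
    intro acc
    obtain ⟨g, s⟩ := p
    cases g <;>
      simp only [List.cons_append, dWord, listE, List.map_cons, List.sum_cons,
        if_true, Bool.false_eq_true, if_false, reduceIte, List.append_eq] <;>
      rw [ih] <;> simp [listE] <;> ring_nf

lemma dWord_step {L L' : List (Bool × Bool)} (h : FreeGroup.Red.Step L L')
    (acc : ℤ) : dWord L acc = dWord L' acc := by
  cases h with
  | @not L₁ L₂ x b =>
    rw [dWord_append, dWord_append]
    congr 1
    cases x
    · simp only [dWord, Bool.false_eq_true, if_false, sgn_not]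
      congr 1
      ring
    · simp only [dWord, if_true, sgn_not]
      ring

lemma listE_step {L L' : List (Bool × Bool)} (h : FreeGroup.Red.Step L L')
    (g : Bool) : listE g L = listE g L' := by
  cases h with
  | @not L₁ L₂ x b =>
    rw [listE_append, listE_append]
    simp only [listE, List.map_cons, List.sum_cons, sgn_not]
    by_cases hx : x = g <;> simp [hx]

lemma dWord_red {L L' : List (Bool × Bool)} (h : FreeGroup.Red L L')
    (acc : ℤ) : dWord L acc = dWord L' acc := by
  induction h with
  | refl => rfl
  | tail _ step ih => rw [ih, dWord_step step]

lemma listE_red {L L' : List (Bool × Bool)} (h : FreeGroup.Red L L')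
    (g : Bool) : listE g L = listE g L' := by
  induction h with
  | refl => rfl
  | tail _ step ih => rw [ih, listE_step step]

lemma moritaD_mul (u v : FreeGroup Bool) :
    moritaD (u * v) = moritaD u + moritaD v
      + listE false u.toWord * listE true v.toWord := by
  have h : FreeGroup.Red (u.toWord ++ v.toWord) (u * v).toWord := by
    have : u * v = FreeGroup.mk (u.toWord ++ v.toWord) := by
      rw [← FreeGroup.mul_mk, FreeGroup.mk_toWord, FreeGroup.mk_toWord]
    rw [this, FreeGroup.toWord_mk]
    exact FreeGroup.reduce.red
  unfold moritaD
  rw [← dWord_red h, dWord_append, dWord_acc v.toWord, dWord_acc v.toWord 0]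
  ring

lemma expSum_eq (g : Bool) (w : FreeGroup Bool) : expSum g w = listE g w.toWord := rfl

lemma expSum_mul (g : Bool) (u v : FreeGroup Bool) :
    expSum g (u * v) = expSum g u + expSum g v := by
  have h : FreeGroup.Red (u.toWord ++ v.toWord) (u * v).toWord := by
    have : u * v = FreeGroup.mk (u.toWord ++ v.toWord) := by
      rw [← FreeGroup.mul_mk, FreeGroup.mk_toWord, FreeGroup.mk_toWord]
    rw [this, FreeGroup.toWord_mk]
    exact FreeGroup.reduce.red
  rw [expSum_eq, expSum_eq, expSum_eq, ← listE_red h, listE_append]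

/-- For all `u, v ∈ F₂`,
`d(uv) − d(vu) = e_α(u)·e_β(v) − e_α(v)·e_β(u)`. -/
theorem morita_d_comm (u v : FreeGroup Bool) :
    moritaD (u * v) - moritaD (v * u)
      = expSum false u * expSum true v - expSum false v * expSum true u := by
  rw [moritaD_mul, moritaD_mul, expSum_eq, expSum_eq, expSum_eq, expSum_eq]
  ring
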